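/- Let (sₙ) be a sequence of nonnegative reals bounded above by B > 0, and let f : ℕ → ℕ be monotone, k, n ∈ ℕ. If s_{i+1} ≤ s_i for all i ∈ [n, max{n, (f+1)^{(⌈B(k+1)⌉)}(n)}] together with f((f+1)^{(⌈B(k+1)⌉)}(n)) (i.e. on the full range up to f(φ₂(k,n,f+1))), then there exists n' ≤ max{n, (f+1)^{(⌈B(k+1)⌉)}(n)} such that 0 ≤ s_i − s_{i+1} ≤ 1/(k+1) for all i ∈ [n', f(n')]. -/

import Mathlib

theorem stmt17 (s : ℕ → ℝ) (B : ℝ) (hB : 0 < B)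
    (hs : ∀ n, 0 ≤ s n) (hsB : ∀ n, s n ≤ B)
    (f : ℕ → ℕ) (hf : Monotone f) (k n : ℕ)
    (hdec : ∀ i ∈ Finset.Icc n
        (f (max n ((fun m => f m + 1)^[⌈B * (k + 1)⌉₊] n)) + 1),
      s (i + 1) ≤ s i) :
    ∃ n' ≤ max n ((fun m => f m + 1)^[⌈B * (k + 1)⌉₊] n),
      ∀ i ∈ Finset.Icc n' (f n'),
        0 ≤ s i - s (i + 1) ∧ s i - s (i + 1) ≤ 1 / (k + 1) := by
  set g : ℕ → ℕ := fun m => f m + 1 with hg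
  set N := ⌈B * ((k : ℝ) + 1)⌉₊ with hNdef
  by_cases hfn : f n < n
  · refine ⟨n, le_max_left _ _, fun i hi => absurd hi ?_⟩
    simp only [Finset.mem_Icc]
    omega
  · push_neg at hfn
    set M := max n (g^[N] n) with hM
    have hgmono : Monotone g := fun a b h => by
      simp only [hg]; exact Nat.add_le_add_right (hf h) 1
    have hle : n ≤ g n := by simp only [hg]; omega
    have hiter : Monotone fun j => g^[j] n :=
      hgmono.monotone_iterate_of_le_map hle
    have hna : ∀ j, n ≤ g^[j] n := fun j => by
      simpa using hiter (Nat.zero_le j)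
    have haj : ∀ j ≤ N, g^[j] n ≤ M := fun j hj =>
      le_max_of_le_right (hiter hj)
    have hanti : ∀ p q : ℕ, n ≤ p → p ≤ q → q ≤ f M + 2 → s q ≤ s p := by
      intro p q hnp hpq
      induction q, hpq using Nat.le_induction with
      | base => intro _; exact le_refl _
      | succ q hpq IH =>
        intro hq2
        have h1 : s (q + 1) ≤ s q :=
          hdec q (Finset.mem_Icc.2 ⟨le_trans hnp hpq, by omega⟩)
        exact le_trans h1 (IH (by omega))
    by_contra hcon
    push_neg at hcon
    have hk : (0 : ℝ) < (k : ℝ) + 1 := by positivity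
    have key : ∀ j < N, 1 / ((k : ℝ) + 1) < s (g^[j] n) - s (g^[j+1] n) := by
      intro j hj
      obtain ⟨i, hi, hbad⟩ := hcon (g^[j] n) (haj j hj.le)
      rw [Finset.mem_Icc] at hi
      have hni : n ≤ i := le_trans (hna j) hi.1
      have hfm : f (g^[j] n) ≤ f M := hf (haj j hj.le)
      have h1 : i ≤ f M + 1 := by omega
      have hdrop0 : 0 ≤ s i - s (i + 1) :=
        sub_nonneg.2 (hdec i (Finset.mem_Icc.2 ⟨hni, h1⟩))
      have hbad' := hbad hdrop0
      have hsucc : g^[j+1] n = f (g^[j] n) + 1 := by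
        rw [Function.iterate_succ_apply']
      have h2 : s (g^[j+1] n) ≤ s (i + 1) := by
        apply hanti (i + 1) (g^[j+1] n) (by omega) (by omega) (by omega)
      have h3 : s i ≤ s (g^[j] n) := hanti _ _ (hna j) hi.1 (by omega)
      linarith
    have hsum := Finset.sum_range_sub' (fun j => s (g^[j] n)) N
    have hNpos : 0 < N := Nat.ceil_pos.mpr (by positivity)
    have hlt : (N : ℝ) * (1 / ((k : ℝ) + 1)) <
        ∑ j ∈ Finset.range N, (s (g^[j] n) - s (g^[j+1] n)) := by
      have := Finset.sum_lt_sum_of_nonempty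
        (Finset.nonempty_range_iff.mpr hNpos.ne')
        (f := fun _ => 1 / ((k : ℝ) + 1))
        (g := fun j => s (g^[j] n) - s (g^[j+1] n))
        (fun j hj => key j (Finset.mem_range.mp hj))
      simpa [Finset.sum_const, nsmul_eq_mul] using this
    have hceil : B * ((k : ℝ) + 1) ≤ (N : ℝ) := Nat.le_ceil _
    have hB' : B ≤ (N : ℝ) * (1 / ((k : ℝ) + 1)) := by
      rw [mul_one_div, le_div_iff₀ hk]
      exact hceil
    have hs0 : s (g^[0] n) = s n := by simp
    have h1 : s n ≤ B := hsB n
    have h2 : 0 ≤ s (g^[N] n) := hs _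
    rw [hs0] at hsum
    linarith [hsum, hlt, hB', h1, h2]
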